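/- arXiv:1612.02986 — 2 statements merged into one kernel-verified Lean document; each statement's English description precedes it below -/
import Mathlib

section
/- Let G be a benzenoid system with a perfect matching. If the resonance graph R(G) contains a 4-cycle M1 M2 M3 M4 (where M1, M2, M3, M4 are perfect matchings of G), then h = M1 ⊕ M2 and h' = M1 ⊕ M4 are edge sets of two vertex-disjoint hexagons of G; moreover M3 ⊕ M4 = h and M2 ⊕ M3 = h'. -/
open scoped symmDiff

namespace GZZ

/-! ### Cells (hexagonal faces) of the hexagonal lattice in "brick wall" coordinates.

A vertex of the hexagonal lattice is a pair `(x, y) : ℤ × ℤ`; horizontal edges join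
`(x, y)` and `(x + 1, y)`, and vertical edges join `(x, y)` and `(x, y + 1)` for `x + y` even.
The hexagonal faces of the lattice are indexed by their lower-left vertex `c`
(with `c.1 + c.2` even). -/

abbrev V2 := ℤ × ℤ

/-- The six vertices of the hexagonal face with lower-left corner `c`. -/
def cellVerts (c : V2) : Set V2 :=
  {(c.1, c.2), (c.1 + 1, c.2), (c.1 + 2, c.2),
   (c.1, c.2 + 1), (c.1 + 1, c.2 + 1), (c.1 + 2, c.2 + 1)}

/-- The six edges of the hexagonal face with lower-left corner `c`. -/
def cellEdges (c : V2) : Set (Sym2 V2) :=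
  {s((c.1, c.2), (c.1 + 1, c.2)), s((c.1 + 1, c.2), (c.1 + 2, c.2)),
   s((c.1, c.2 + 1), (c.1 + 1, c.2 + 1)), s((c.1 + 1, c.2 + 1), (c.1 + 2, c.2 + 1)),
   s((c.1, c.2), (c.1, c.2 + 1)), s((c.1 + 2, c.2), (c.1 + 2, c.2 + 1))}

/-- Two hexagonal faces are adjacent when they share an edge. -/
def cellAdj (c d : V2) : Prop :=
  (d.1 - c.1, d.2 - c.2) ∈ ({(2, 0), (-2, 0), (1, 1), (1, -1), (-1, 1), (-1, -1)} : Set V2)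

/-- A set of hexagonal faces is connected (via sharing edges). -/
def CellConnected (S : Set V2) : Prop :=
  ∀ c ∈ S, ∀ d ∈ S, Relation.ReflTransGen (fun a b => a ∈ S ∧ b ∈ S ∧ cellAdj a b) c d

/-- A benzenoid system, given by its (finite, nonempty) set `B` of hexagonal faces:
the faces form a connected set and the complement has no holes (it is connected),
which is exactly the condition that `B` consists of all hexagons lying in the region
bounded by a cycle of the hexagonal lattice. -/
def IsBenzenoid (B : Set V2) : Prop :=
  B.Finite ∧ B.Nonempty ∧ (∀ c ∈ B, Even (c.1 + c.2)) ∧ CellConnected B ∧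
    CellConnected {c : V2 | Even (c.1 + c.2) ∧ c ∉ B}

section Generic

/-! ### Perfect matchings, resonance graphs and generalized Clar covers,
generically in a system of hexagonal cells `B` with vertex sets `cv` and edge sets `ce`. -/

variable {V C : Type*} (cv : C → Set V) (ce : C → Set (Sym2 V)) (B : Set C)

/-- The vertices of the system with cell set `B`. -/
def sysVerts : Set V := ⋃ c ∈ B, cv c

/-- The edges of the system with cell set `B`. -/
def sysEdges : Set (Sym2 V) := ⋃ c ∈ B, ce c

/-- A perfect matching: a set of pairwise non-incident edges of the system
covering all vertices of the system. -/
def IsPM (M : Set (Sym2 V)) : Prop :=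
  M ⊆ sysEdges ce B ∧
    (∀ e ∈ M, ∀ f ∈ M, e ≠ f → ∀ v : V, v ∈ e → v ∉ f) ∧
    (∀ v ∈ sysVerts cv B, ∃ e ∈ M, v ∈ e)

/-- The type of perfect matchings of the system. -/
abbrev PM := {M : Set (Sym2 V) // IsPM cv ce B M}

/-- The resonance graph: vertices are the perfect matchings, two perfect matchings
being adjacent whenever their symmetric difference is the edge set of a hexagon. -/
def resGraph : SimpleGraph (PM cv ce B) where
  Adj M N := M ≠ N ∧ ∃ c ∈ B, (M.val ∆ N.val) = ce c
  symm := ⟨by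
    rintro M N ⟨hne, c, hc, hd⟩
    exact ⟨hne.symm, c, hc, by rwa [symmDiff_comm]⟩⟩
  loopless := ⟨fun M h => h.1 rfl⟩

/-- The connected component (vertex set) of `v` in the spanning subgraph with edge set `E'`. -/
def compSet (E' : Set (Sym2 V)) (v : V) : Set V :=
  {w | (SimpleGraph.fromEdgeSet E').Reachable v w}

/-- The component of `v` in the spanning subgraph with edge set `E'` is a single edge `K₂`. -/
def IsK2Comp (E' : Set (Sym2 V)) (v : V) : Prop :=
  ∃ u w : V, u ≠ w ∧ s(u, w) ∈ E' ∧ compSet E' v = {u, w}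

/-- The component of `v` in the spanning subgraph with edge set `E'` is a cycle `Cₙ`. -/
def IsCycComp (n : ℕ) [NeZero n] (E' : Set (Sym2 V)) (v : V) : Prop :=
  ∃ c : ZMod n → V, Function.Injective c ∧ compSet E' v = Set.range c ∧
    (∀ i : ZMod n, s(c i, c (i + 1)) ∈ E') ∧
    (∀ e ∈ E', (∀ u, u ∈ e → u ∈ Set.range c) → ∃ i : ZMod n, e = s(c i, c (i + 1)))

/-- The number of `Cₙ`-components of the spanning subgraph with edge set `E'`. -/
noncomputable def numCyc (n : ℕ) [NeZero n] (Vs : Set V) (E' : Set (Sym2 V)) : ℕ :=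
  Set.ncard {S : Set V | ∃ v ∈ Vs, IsCycComp n E' v ∧ S = compSet E' v}

/-- A generalized Clar cover: a spanning subgraph (given by its edge set `E'`) of the
system each of whose connected components is a `C₆`, a `C₁₀` or a `K₂`. -/
def IsGenClarCover (E' : Set (Sym2 V)) : Prop :=
  E' ⊆ sysEdges ce B ∧
    ∀ v ∈ sysVerts cv B, IsK2Comp E' v ∨ IsCycComp 6 E' v ∨ IsCycComp 10 E' v

/-- `gz B k l`: the number of generalized Clar covers with exactly `k` components `C₆`
and `l` components `C₁₀`. -/
noncomputable def gz (k l : ℕ) : ℕ :=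
  Set.ncard {E' : Set (Sym2 V) | IsGenClarCover cv ce B E' ∧
    numCyc 6 (sysVerts cv B) E' = k ∧ numCyc 10 (sysVerts cv B) E' = l}

/-- The set of vertices of the resonance graph assigned by the map `f_{k,l}` to a
generalized Clar cover `E'`: all perfect matchings `M` such that `|M ∩ E(c)| = 3` for every
`C₆`-component (a hexagon) `c` of `E'`, `|M ∩ (E(h₁) ∪ E(h₂))| = 5` for every
`C₁₀`-component of `E'` formed by two hexagons `h₁, h₂`, and every `K₂`-component edge
of `E'` belongs to `M`. -/
def fSet (E' : Set (Sym2 V)) : Set (PM cv ce B) :=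
  {M | (∀ v ∈ sysVerts cv B, IsCycComp 6 E' v → ∀ h ∈ B, compSet E' v = cv h →
          Set.ncard (M.val ∩ ce h) = 3) ∧
       (∀ v ∈ sysVerts cv B, IsCycComp 10 E' v → ∀ h₁ ∈ B, ∀ h₂ ∈ B, h₁ ≠ h₂ →
          compSet E' v = cv h₁ ∪ cv h₂ →
          Set.ncard (M.val ∩ (ce h₁ ∪ ce h₂)) = 5) ∧
       (∀ u w : V, s(u, w) ∈ E' → compSet E' u = {u, w} → s(u, w) ∈ M.val)}

end Generic

/-! ### The graphs `Q_{k,l}` and the generalized cube polynomial. -/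

/-- The Cartesian (box) product of `n` copies of a graph `G`. -/
def boxPow {α : Type*} (G : SimpleGraph α) : (n : ℕ) → SimpleGraph (Fin n → α)
  | 0 => ⊥
  | n + 1 =>
    SimpleGraph.comap (fun f => (fun i => f i.castSucc, f (Fin.last n)))
      ((boxPow G n).boxProd G)

/-- The graph `Q_{k,l} = P₂^k □ P₃^l`. -/
def QGraph (k l : ℕ) : SimpleGraph ((Fin k → Fin 2) × (Fin l → Fin 3)) :=
  (boxPow (SimpleGraph.pathGraph 2) k).boxProd (boxPow (SimpleGraph.pathGraph 3) l)

/-- A set of vertices is convex if every shortest path between two of its vertices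
stays inside it. -/
def IsConvex {W : Type*} (G : SimpleGraph W) (S : Set W) : Prop :=
  ∀ u v : W, u ∈ S → v ∈ S → ∀ p : G.Walk u v, p.IsPath → p.length = G.dist u v →
    ∀ w ∈ p.support, w ∈ S

/-- `alphaQ G k l`: the number of induced convex subgraphs of `G` isomorphic to `Q_{k,l}`. -/
noncomputable def alphaQ {W : Type*} (G : SimpleGraph W) (k l : ℕ) : ℕ :=
  Set.ncard {S : Set W | IsConvex G S ∧ Nonempty (G.induce S ≃g QGraph k l)}

end GZZ
namespace GZZ

lemma otherA {a b p q : ℤ} (hab : (a + b) % 2 = 0) (hpq : (p + q) % 2 = 0)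
    (hne : ¬(p = a ∧ q = b)) (h : s(((a : ℤ), (b : ℤ)), ((a + 1 : ℤ), (b : ℤ))) ∈ cellEdges (p, q)) :
    p = a - 1 ∧ q = b - 1 := by
  simp only [cellEdges, Set.mem_insert_iff, Set.mem_singleton_iff, Sym2.eq_iff, Prod.mk.injEq] at h
  omega

lemma otherB {a b p q : ℤ} (hab : (a + b) % 2 = 0) (hpq : (p + q) % 2 = 0)
    (hne : ¬(p = a ∧ q = b)) (h : s(((a + 1 : ℤ), (b : ℤ)), ((a + 2 : ℤ), (b : ℤ))) ∈ cellEdges (p, q)) :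
    p = a + 1 ∧ q = b - 1 := by
  simp only [cellEdges, Set.mem_insert_iff, Set.mem_singleton_iff, Sym2.eq_iff, Prod.mk.injEq] at h
  omega

lemma otherC {a b p q : ℤ} (hab : (a + b) % 2 = 0) (hpq : (p + q) % 2 = 0)
    (hne : ¬(p = a ∧ q = b)) (h : s(((a : ℤ), (b + 1 : ℤ)), ((a + 1 : ℤ), (b + 1 : ℤ))) ∈ cellEdges (p, q)) :
    p = a - 1 ∧ q = b + 1 := by
  simp only [cellEdges, Set.mem_insert_iff, Set.mem_singleton_iff, Sym2.eq_iff, Prod.mk.injEq] at h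
  omega

lemma otherD {a b p q : ℤ} (hab : (a + b) % 2 = 0) (hpq : (p + q) % 2 = 0)
    (hne : ¬(p = a ∧ q = b)) (h : s(((a + 1 : ℤ), (b + 1 : ℤ)), ((a + 2 : ℤ), (b + 1 : ℤ))) ∈ cellEdges (p, q)) :
    p = a + 1 ∧ q = b + 1 := by
  simp only [cellEdges, Set.mem_insert_iff, Set.mem_singleton_iff, Sym2.eq_iff, Prod.mk.injEq] at h
  omega

lemma otherE {a b p q : ℤ} (hab : (a + b) % 2 = 0) (hpq : (p + q) % 2 = 0)
    (hne : ¬(p = a ∧ q = b)) (h : s(((a : ℤ), (b : ℤ)), ((a : ℤ), (b + 1 : ℤ))) ∈ cellEdges (p, q)) :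
    p = a - 2 ∧ q = b := by
  simp only [cellEdges, Set.mem_insert_iff, Set.mem_singleton_iff, Sym2.eq_iff, Prod.mk.injEq] at h
  omega

lemma otherF {a b p q : ℤ} (hab : (a + b) % 2 = 0) (hpq : (p + q) % 2 = 0)
    (hne : ¬(p = a ∧ q = b)) (h : s(((a + 2 : ℤ), (b : ℤ)), ((a + 2 : ℤ), (b + 1 : ℤ))) ∈ cellEdges (p, q)) :
    p = a + 2 ∧ q = b := by
  simp only [cellEdges, Set.mem_insert_iff, Set.mem_singleton_iff, Sym2.eq_iff, Prod.mk.injEq] at h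
  omega

lemma shared_unique {c d : V2} (hc : Even (c.1 + c.2)) (hd : Even (d.1 + d.2))
    (hcd : c ≠ d) {e₁ e₂ : Sym2 V2}
    (h1c : e₁ ∈ cellEdges c) (h1d : e₁ ∈ cellEdges d)
    (h2c : e₂ ∈ cellEdges c) (h2d : e₂ ∈ cellEdges d) : e₁ = e₂ := by
  obtain ⟨a, b⟩ := c
  obtain ⟨p, q⟩ := d
  rw [Int.even_iff] at hc hd
  have hne : ¬(p = a ∧ q = b) := by
    intro ⟨h1, h2⟩; exact hcd (by simp [h1, h2])
  simp only [cellEdges, Set.mem_insert_iff, Set.mem_singleton_iff] at h1c h2c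
  rcases h1c with rfl|rfl|rfl|rfl|rfl|rfl <;>
    rcases h2c with rfl|rfl|rfl|rfl|rfl|rfl <;>
    first
      | rfl
      | (exfalso
         first
           | have hA := otherA hc hd hne h1d
           | have hA := otherB hc hd hne h1d
           | have hA := otherC hc hd hne h1d
           | have hA := otherD hc hd hne h1d
           | have hA := otherE hc hd hne h1d
           | have hA := otherF hc hd hne h1d
         first
           | have hB := otherA hc hd hne h2d
           | have hB := otherB hc hd hne h2d
           | have hB := otherC hc hd hne h2d
           | have hB := otherD hc hd hne h2d
           | have hB := otherE hc hd hne h2d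
           | have hB := otherF hc hd hne h2d
         omega)

lemma two_edges_at {c u : V2} (hu : u ∈ cellVerts c) :
    ∃ f₁ f₂ : Sym2 V2, f₁ ≠ f₂ ∧ f₁ ∈ cellEdges c ∧ f₂ ∈ cellEdges c ∧ u ∈ f₁ ∧ u ∈ f₂ := by
  obtain ⟨a, b⟩ := c
  simp only [cellVerts, Set.mem_insert_iff, Set.mem_singleton_iff] at hu
  rcases hu with rfl|rfl|rfl|rfl|rfl|rfl
  · exact ⟨s(((a : ℤ), (b : ℤ)), (a + 1, b)), s(((a : ℤ), (b : ℤ)), (a, b + 1)),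
      by simp only [ne_eq, Sym2.eq_iff, Prod.mk.injEq]; omega,
      by simp [cellEdges], by simp [cellEdges], Sym2.mem_mk_left _ _, Sym2.mem_mk_left _ _⟩
  · exact ⟨s(((a : ℤ), (b : ℤ)), (a + 1, b)), s(((a + 1 : ℤ), (b : ℤ)), (a + 2, b)),
      by simp only [ne_eq, Sym2.eq_iff, Prod.mk.injEq]; omega,
      by simp [cellEdges], by simp [cellEdges], Sym2.mem_mk_right _ _, Sym2.mem_mk_left _ _⟩
  · exact ⟨s(((a + 1 : ℤ), (b : ℤ)), (a + 2, b)), s(((a + 2 : ℤ), (b : ℤ)), (a + 2, b + 1)),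
      by simp only [ne_eq, Sym2.eq_iff, Prod.mk.injEq]; omega,
      by simp [cellEdges], by simp [cellEdges], Sym2.mem_mk_right _ _, Sym2.mem_mk_left _ _⟩
  · exact ⟨s(((a : ℤ), (b + 1 : ℤ)), (a + 1, b + 1)), s(((a : ℤ), (b : ℤ)), (a, b + 1)),
      by simp only [ne_eq, Sym2.eq_iff, Prod.mk.injEq]; omega,
      by simp [cellEdges], by simp [cellEdges], Sym2.mem_mk_left _ _, Sym2.mem_mk_right _ _⟩
  · exact ⟨s(((a : ℤ), (b + 1 : ℤ)), (a + 1, b + 1)), s(((a + 1 : ℤ), (b + 1 : ℤ)), (a + 2, b + 1)),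
      by simp only [ne_eq, Sym2.eq_iff, Prod.mk.injEq]; omega,
      by simp [cellEdges], by simp [cellEdges], Sym2.mem_mk_right _ _, Sym2.mem_mk_left _ _⟩
  · exact ⟨s(((a + 1 : ℤ), (b + 1 : ℤ)), (a + 2, b + 1)), s(((a + 2 : ℤ), (b : ℤ)), (a + 2, b + 1)),
      by simp only [ne_eq, Sym2.eq_iff, Prod.mk.injEq]; omega,
      by simp [cellEdges], by simp [cellEdges], Sym2.mem_mk_right _ _, Sym2.mem_mk_right _ _⟩

lemma matching_edge_at {B : Set V2} (M M' : PM cellVerts cellEdges B) {c : V2}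
    (hd : M.val ∆ M'.val = cellEdges c) {u : V2} (hu : u ∈ cellVerts c) :
    ∃ e ∈ M.val, u ∈ e ∧ e ∈ cellEdges c := by
  obtain ⟨f₁, f₂, hne, h1c, h2c, h1u, h2u⟩ := two_edges_at hu
  have h1 : f₁ ∈ M.val ∆ M'.val := by rw [hd]; exact h1c
  have h2 : f₂ ∈ M.val ∆ M'.val := by rw [hd]; exact h2c
  rw [Set.mem_symmDiff] at h1 h2
  rcases h1 with ⟨h1M, _⟩ | ⟨h1M', _⟩
  · exact ⟨f₁, h1M, h1u, h1c⟩
  rcases h2 with ⟨h2M, _⟩ | ⟨h2M', _⟩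
  · exact ⟨f₂, h2M, h2u, h2c⟩
  · exact absurd h2u (M'.2.2.1 f₁ h1M' f₂ h2M' hne u h1u)

/-- **Lemma 3.** If the resonance graph of a benzenoid system `G` contains a
4-cycle `M₁M₂M₃M₄`, then `h = M₁ ⊕ M₂` and `h' = M₁ ⊕ M₄` are edge sets of two
vertex-disjoint hexagons of `G`; moreover `M₃ ⊕ M₄ = h` and `M₂ ⊕ M₃ = h'`. -/
theorem four_cycle_lemma (B : Set V2) (hB : IsBenzenoid B)
    (M₁ M₂ M₃ M₄ : PM cellVerts cellEdges B)
    (h12 : (resGraph cellVerts cellEdges B).Adj M₁ M₂)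
    (h23 : (resGraph cellVerts cellEdges B).Adj M₂ M₃)
    (h34 : (resGraph cellVerts cellEdges B).Adj M₃ M₄)
    (h41 : (resGraph cellVerts cellEdges B).Adj M₄ M₁)
    (h13 : M₁ ≠ M₃) (h24 : M₂ ≠ M₄) :
    ∃ h ∈ B, ∃ h' ∈ B,
      M₁.val ∆ M₂.val = cellEdges h ∧ M₁.val ∆ M₄.val = cellEdges h' ∧
      cellVerts h ∩ cellVerts h' = ∅ ∧
      M₃.val ∆ M₄.val = cellEdges h ∧ M₂.val ∆ M₃.val = cellEdges h' := by
  have h12' : M₁ ≠ M₂ ∧ ∃ c ∈ B, (M₁.val ∆ M₂.val) = cellEdges c := h12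
  have h23' : M₂ ≠ M₃ ∧ ∃ c ∈ B, (M₂.val ∆ M₃.val) = cellEdges c := h23
  have h34' : M₃ ≠ M₄ ∧ ∃ c ∈ B, (M₃.val ∆ M₄.val) = cellEdges c := h34
  have h41' : M₄ ≠ M₁ ∧ ∃ c ∈ B, (M₄.val ∆ M₁.val) = cellEdges c := h41
  obtain ⟨hne12, c₁, hc₁B, hd12⟩ := h12'
  obtain ⟨hne23, c₂, hc₂B, hd23⟩ := h23'
  obtain ⟨hne34, c₃, hc₃B, hd34⟩ := h34'
  obtain ⟨hne41, c₄, hc₄B, hd41⟩ := h41'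
  have hev := hB.2.2.1
  have hv13 : M₁.val ≠ M₃.val := fun h => h13 (Subtype.ext h)
  have hv24 : M₂.val ≠ M₄.val := fun h => h24 (Subtype.ext h)
  have key : M₁.val ∆ M₃.val = cellEdges c₁ ∆ cellEdges c₂ := by
    rw [← hd12, ← hd23, symmDiff_assoc, symmDiff_symmDiff_cancel_left]
  have key' : M₁.val ∆ M₃.val = cellEdges c₃ ∆ cellEdges c₄ := by
    rw [← hd34, ← hd41, symmDiff_assoc, symmDiff_symmDiff_cancel_left,
      symmDiff_comm M₁.val M₃.val]
  have key24 : M₂.val ∆ M₄.val = cellEdges c₁ ∆ cellEdges c₄ := by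
    rw [← hd12, ← hd41, symmDiff_comm M₁.val M₂.val, symmDiff_comm M₄.val M₁.val,
      symmDiff_assoc, symmDiff_symmDiff_cancel_left]
  have hc12 : c₁ ≠ c₂ := by
    intro h
    exact hv13 (symmDiff_eq_bot.mp (by rw [key, h, symmDiff_self]))
  have hc14 : c₁ ≠ c₄ := by
    intro h
    exact hv24 (symmDiff_eq_bot.mp (by rw [key24, h, symmDiff_self]))
  have hc13 : c₁ = c₃ := by
    by_contra hne13
    have hmem : ∀ f ∈ cellEdges c₁, f ∈ cellEdges c₂ ∨ f ∈ cellEdges c₃ ∨ f ∈ cellEdges c₄ := by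
      intro f hf
      by_cases h2 : f ∈ cellEdges c₂
      · exact Or.inl h2
      · have hm : f ∈ cellEdges c₁ ∆ cellEdges c₂ := Set.mem_symmDiff.mpr (Or.inl ⟨hf, h2⟩)
        rw [key.symm.trans key'] at hm
        rcases Set.mem_symmDiff.mp hm with ⟨h, _⟩ | ⟨h, _⟩
        · exact Or.inr (Or.inl h)
        · exact Or.inr (Or.inr h)
    have u2 : ∀ e₁ e₂ : Sym2 V2, e₁ ∈ cellEdges c₁ → e₁ ∈ cellEdges c₂ →
        e₂ ∈ cellEdges c₁ → e₂ ∈ cellEdges c₂ → e₁ = e₂ :=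
      fun e₁ e₂ p1 p2 p3 p4 =>
        shared_unique (hev c₁ hc₁B) (hev c₂ hc₂B) hc12 p1 p2 p3 p4
    have u3 : ∀ e₁ e₂ : Sym2 V2, e₁ ∈ cellEdges c₁ → e₁ ∈ cellEdges c₃ →
        e₂ ∈ cellEdges c₁ → e₂ ∈ cellEdges c₃ → e₁ = e₂ :=
      fun e₁ e₂ p1 p2 p3 p4 =>
        shared_unique (hev c₁ hc₁B) (hev c₃ hc₃B) hne13 p1 p2 p3 p4
    have u4 : ∀ e₁ e₂ : Sym2 V2, e₁ ∈ cellEdges c₁ → e₁ ∈ cellEdges c₄ →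
        e₂ ∈ cellEdges c₁ → e₂ ∈ cellEdges c₄ → e₁ = e₂ :=
      fun e₁ e₂ p1 p2 p3 p4 =>
        shared_unique (hev c₁ hc₁B) (hev c₄ hc₄B) hc14 p1 p2 p3 p4
    obtain ⟨a, b⟩ := c₁
    have hf1 : s(((a : ℤ), (b : ℤ)), (a + 1, b)) ∈ cellEdges (a, b) := by simp [cellEdges]
    have hf2 : s(((a + 1 : ℤ), (b : ℤ)), (a + 2, b)) ∈ cellEdges (a, b) := by simp [cellEdges]
    have hf3 : s(((a : ℤ), (b + 1 : ℤ)), (a + 1, b + 1)) ∈ cellEdges (a, b) := by simp [cellEdges]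
    have hf4 : s(((a + 1 : ℤ), (b + 1 : ℤ)), (a + 2, b + 1)) ∈ cellEdges (a, b) := by
      simp [cellEdges]
    have d12 : s(((a : ℤ), (b : ℤ)), (a + 1, b)) ≠ s(((a + 1 : ℤ), (b : ℤ)), (a + 2, b)) := by
      simp only [ne_eq, Sym2.eq_iff, Prod.mk.injEq]; omega
    have d13 : s(((a : ℤ), (b : ℤ)), (a + 1, b)) ≠ s(((a : ℤ), (b + 1 : ℤ)), (a + 1, b + 1)) := by
      simp only [ne_eq, Sym2.eq_iff, Prod.mk.injEq]; omega
    have d14 : s(((a : ℤ), (b : ℤ)), (a + 1, b)) ≠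
        s(((a + 1 : ℤ), (b + 1 : ℤ)), (a + 2, b + 1)) := by
      simp only [ne_eq, Sym2.eq_iff, Prod.mk.injEq]; omega
    have d23 : s(((a + 1 : ℤ), (b : ℤ)), (a + 2, b)) ≠
        s(((a : ℤ), (b + 1 : ℤ)), (a + 1, b + 1)) := by
      simp only [ne_eq, Sym2.eq_iff, Prod.mk.injEq]; omega
    have d24 : s(((a + 1 : ℤ), (b : ℤ)), (a + 2, b)) ≠
        s(((a + 1 : ℤ), (b + 1 : ℤ)), (a + 2, b + 1)) := by
      simp only [ne_eq, Sym2.eq_iff, Prod.mk.injEq]; omega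
    have d34 : s(((a : ℤ), (b + 1 : ℤ)), (a + 1, b + 1)) ≠
        s(((a + 1 : ℤ), (b + 1 : ℤ)), (a + 2, b + 1)) := by
      simp only [ne_eq, Sym2.eq_iff, Prod.mk.injEq]; omega
    have m1 := hmem _ hf1
    have m2 := hmem _ hf2
    have m3 := hmem _ hf3
    have m4 := hmem _ hf4
    rcases m1 with x1|x1|x1 <;> rcases m2 with x2|x2|x2 <;>
      rcases m3 with x3|x3|x3 <;> rcases m4 with x4|x4|x4 <;>
      first
        | exact d12 (u2 _ _ hf1 x1 hf2 x2) | exact d12 (u3 _ _ hf1 x1 hf2 x2)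
        | exact d12 (u4 _ _ hf1 x1 hf2 x2)
        | exact d13 (u2 _ _ hf1 x1 hf3 x3) | exact d13 (u3 _ _ hf1 x1 hf3 x3)
        | exact d13 (u4 _ _ hf1 x1 hf3 x3)
        | exact d14 (u2 _ _ hf1 x1 hf4 x4) | exact d14 (u3 _ _ hf1 x1 hf4 x4)
        | exact d14 (u4 _ _ hf1 x1 hf4 x4)
        | exact d23 (u2 _ _ hf2 x2 hf3 x3) | exact d23 (u3 _ _ hf2 x2 hf3 x3)
        | exact d23 (u4 _ _ hf2 x2 hf3 x3)
        | exact d24 (u2 _ _ hf2 x2 hf4 x4) | exact d24 (u3 _ _ hf2 x2 hf4 x4)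
        | exact d24 (u4 _ _ hf2 x2 hf4 x4)
        | exact d34 (u2 _ _ hf3 x3 hf4 x4) | exact d34 (u3 _ _ hf3 x3 hf4 x4)
        | exact d34 (u4 _ _ hf3 x3 hf4 x4)
  subst hc13
  have hce24 : cellEdges c₂ = cellEdges c₄ := by
    have h := key.symm.trans key'
    calc cellEdges c₂ = cellEdges c₁ ∆ (cellEdges c₁ ∆ cellEdges c₂) := by
          rw [symmDiff_symmDiff_cancel_left]
      _ = cellEdges c₁ ∆ (cellEdges c₁ ∆ cellEdges c₄) := by rw [h]
      _ = cellEdges c₄ := by rw [symmDiff_symmDiff_cancel_left]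
  have hd14 : M₁.val ∆ M₄.val = cellEdges c₄ := by rw [symmDiff_comm]; exact hd41
  have hd21 : M₂.val ∆ M₁.val = cellEdges c₁ := by rw [symmDiff_comm]; exact hd12
  have hd23' : M₂.val ∆ M₃.val = cellEdges c₄ := by rw [hd23, hce24]
  have hdisj : cellVerts c₁ ∩ cellVerts c₄ = ∅ := by
    rw [Set.eq_empty_iff_forall_notMem]
    rintro u ⟨hu1, hu4⟩
    obtain ⟨e, heM, hue, hec1⟩ := matching_edge_at M₁ M₂ hd12 hu1
    obtain ⟨e', he'M, hue', he'c4⟩ := matching_edge_at M₁ M₄ hd14 hu4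
    have hee' : e = e' := by
      by_contra hne
      exact M₁.2.2.1 e heM e' he'M hne u hue hue'
    subst hee'
    obtain ⟨f, hfM, huf, hfc1⟩ := matching_edge_at M₂ M₁ hd21 hu1
    obtain ⟨f', hf'M, huf', hf'c4⟩ := matching_edge_at M₂ M₃ hd23' hu4
    have hff' : f = f' := by
      by_contra hne
      exact M₂.2.2.1 f hfM f' hf'M hne u huf huf'
    subst hff'
    have hef : e = f := shared_unique (hev c₁ hc₁B) (hev c₄ hc₄B) hc14 hec1 he'c4 hfc1 hf'c4
    have hm : e ∈ M₁.val ∆ M₂.val := by rw [hd12]; exact hec1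
    rcases Set.mem_symmDiff.mp hm with ⟨_, hnot⟩ | ⟨_, hnot⟩
    · exact hnot (hef ▸ hfM)
    · exact hnot heM
  exact ⟨c₁, hc₁B, c₄, hc₄B, hd12, hd14, hdisj, hd34, hd23'⟩


end GZZ
end

section
/- Let G be a benzenoid system with a perfect matching, let Q be an induced convex subgraph of R(G) isomorphic to Q_{k,l} with vertices identified with tuples as in the standard representation. Let M be the all-zero vertex; for i ∈ {k+1,…,k+l} let N^i be the vertex with 1 in position i and 0 elsewhere and O^i the vertex with 2 in position i and 0 elsewhere, and let h_i and h_i' be the hexagons of G with M ⊕ N^i = E(h_i) and N^i ⊕ O^i = E(h_i'). Then for each i ∈ {k+1,…,k+l} the hexagons h_i and h_i' have exactly one common edge. -/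
open scoped symmDiff

namespace GZZ

/-- The "tuple" description of `Q_{k,l}`: vertices are tuples
`(b₁, …, b_k, b_{k+1}, …, b_{k+l})` with `bᵢ ∈ {0,1}` for `i ≤ k` and `bᵢ ∈ {0,1,2}` for
`i > k`, two tuples being adjacent iff they differ by exactly `1` in exactly one
coordinate. -/
def tupleGraph (k l : ℕ) : SimpleGraph ((Fin k → Fin 2) × (Fin l → Fin 3)) where
  Adj p q :=
    (∃ i : Fin k, ((p.1 i : ℕ) = (q.1 i : ℕ) + 1 ∨ (q.1 i : ℕ) = (p.1 i : ℕ) + 1) ∧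
      (∀ j : Fin k, j ≠ i → p.1 j = q.1 j) ∧ p.2 = q.2) ∨
    (∃ i : Fin l, ((p.2 i : ℕ) = (q.2 i : ℕ) + 1 ∨ (q.2 i : ℕ) = (p.2 i : ℕ) + 1) ∧
      (∀ j : Fin l, j ≠ i → p.2 j = q.2 j) ∧ p.1 = q.1)
  symm := ⟨by
    rintro p q (⟨i, hd, hj, h2⟩ | ⟨i, hd, hj, h2⟩)
    · exact Or.inl ⟨i, hd.symm, fun j hji => (hj j hji).symm, h2.symm⟩
    · exact Or.inr ⟨i, hd.symm, fun j hji => (hj j hji).symm, h2.symm⟩⟩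
  loopless := ⟨by
    rintro p (⟨i, hd, -, -⟩ | ⟨i, hd, -, -⟩) <;> omega⟩

end GZZ
namespace GZZ

/-! ### Auxiliary lemmas about cells -/

lemma GZZrel_of_shared_edge {c d : V2} {e : Sym2 V2}
    (h1 : e ∈ cellEdges c) (h2 : e ∈ cellEdges d) :
    c.1 - 2 ≤ d.1 ∧ d.1 ≤ c.1 + 2 ∧ c.2 - 1 ≤ d.2 ∧ d.2 ≤ c.2 + 1 := by
  simp only [cellEdges, Set.mem_insert_iff, Set.mem_singleton_iff] at h1 h2
  rcases h1 with rfl | rfl | rfl | rfl | rfl | rfl <;>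
    rcases h2 with h2 | h2 | h2 | h2 | h2 | h2 <;>
    rw [Sym2.eq_iff] at h2 <;> simp only [Prod.mk.injEq] at h2 <;> omega

lemma GZZoff_cases {c d : V2} (hc : Even (c.1 + c.2)) (hd : Even (d.1 + d.2)) (hne : c ≠ d)
    (hb : c.1 - 2 ≤ d.1 ∧ d.1 ≤ c.1 + 2 ∧ c.2 - 1 ≤ d.2 ∧ d.2 ≤ c.2 + 1) :
    (d.1 = c.1 + 2 ∧ d.2 = c.2) ∨ (d.1 = c.1 - 2 ∧ d.2 = c.2) ∨
    (d.1 = c.1 + 1 ∧ d.2 = c.2 + 1) ∨ (d.1 = c.1 + 1 ∧ d.2 = c.2 - 1) ∨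
    (d.1 = c.1 - 1 ∧ d.2 = c.2 + 1) ∨ (d.1 = c.1 - 1 ∧ d.2 = c.2 - 1) := by
  obtain ⟨m, hm⟩ := hc
  obtain ⟨n, hn⟩ := hd
  have hne' : ¬(d.1 = c.1 ∧ d.2 = c.2) := by
    rintro ⟨ha, hb⟩; exact hne (Prod.ext ha.symm hb.symm)
  omega

lemma GZZuniq20 {c d : V2} (hd1 : d.1 = c.1 + 2) (hd2 : d.2 = c.2) {e : Sym2 V2}
    (h1 : e ∈ cellEdges c) (h2 : e ∈ cellEdges d) :
    e = s((c.1 + 2, c.2), (c.1 + 2, c.2 + 1)) := by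
  simp only [cellEdges, Set.mem_insert_iff, Set.mem_singleton_iff] at h1 h2
  rcases h1 with rfl | rfl | rfl | rfl | rfl | rfl <;>
    rcases h2 with h2 | h2 | h2 | h2 | h2 | h2 <;>
    rw [Sym2.eq_iff] at h2 <;> rw [Sym2.eq_iff] <;>
    simp only [Prod.mk.injEq] at h2 ⊢ <;> omega

lemma GZZuniq11 {c d : V2} (hd1 : d.1 = c.1 + 1) (hd2 : d.2 = c.2 + 1) {e : Sym2 V2}
    (h1 : e ∈ cellEdges c) (h2 : e ∈ cellEdges d) :
    e = s((c.1 + 1, c.2 + 1), (c.1 + 2, c.2 + 1)) := by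
  simp only [cellEdges, Set.mem_insert_iff, Set.mem_singleton_iff] at h1 h2
  rcases h1 with rfl | rfl | rfl | rfl | rfl | rfl <;>
    rcases h2 with h2 | h2 | h2 | h2 | h2 | h2 <;>
    rw [Sym2.eq_iff] at h2 <;> rw [Sym2.eq_iff] <;>
    simp only [Prod.mk.injEq] at h2 ⊢ <;> omega

lemma GZZuniq1m1 {c d : V2} (hd1 : d.1 = c.1 + 1) (hd2 : d.2 = c.2 - 1) {e : Sym2 V2}
    (h1 : e ∈ cellEdges c) (h2 : e ∈ cellEdges d) :
    e = s((c.1 + 1, c.2), (c.1 + 2, c.2)) := by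
  simp only [cellEdges, Set.mem_insert_iff, Set.mem_singleton_iff] at h1 h2
  rcases h1 with rfl | rfl | rfl | rfl | rfl | rfl <;>
    rcases h2 with h2 | h2 | h2 | h2 | h2 | h2 <;>
    rw [Sym2.eq_iff] at h2 <;> rw [Sym2.eq_iff] <;>
    simp only [Prod.mk.injEq] at h2 ⊢ <;> omega

lemma GZZshared_subsingleton {c d : V2} (hc : Even (c.1 + c.2)) (hd : Even (d.1 + d.2))
    (hne : c ≠ d) : (cellEdges c ∩ cellEdges d).Subsingleton := by
  rintro e ⟨he1, he2⟩ e' ⟨he1', he2'⟩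
  rcases GZZoff_cases hc hd hne (GZZrel_of_shared_edge he1 he2) with
    ⟨h1, h2⟩ | ⟨h1, h2⟩ | ⟨h1, h2⟩ | ⟨h1, h2⟩ | ⟨h1, h2⟩ | ⟨h1, h2⟩
  · rw [GZZuniq20 h1 h2 he1 he2, GZZuniq20 h1 h2 he1' he2']
  · rw [GZZuniq20 (c := d) (by omega) (by omega) he2 he1,
        GZZuniq20 (c := d) (by omega) (by omega) he2' he1']
  · rw [GZZuniq11 h1 h2 he1 he2, GZZuniq11 h1 h2 he1' he2']
  · rw [GZZuniq1m1 h1 h2 he1 he2, GZZuniq1m1 h1 h2 he1' he2']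
  · rw [GZZuniq1m1 (c := d) (by omega) (by omega) he2 he1,
        GZZuniq1m1 (c := d) (by omega) (by omega) he2' he1']
  · rw [GZZuniq11 (c := d) (by omega) (by omega) he2 he1,
        GZZuniq11 (c := d) (by omega) (by omega) he2' he1']

lemma GZZrel_of_shared_vert {c d v : V2} (h1 : v ∈ cellVerts c) (h2 : v ∈ cellVerts d) :
    c.1 - 2 ≤ d.1 ∧ d.1 ≤ c.1 + 2 ∧ c.2 - 1 ≤ d.2 ∧ d.2 ≤ c.2 + 1 := by
  simp only [cellVerts, Set.mem_insert_iff, Set.mem_singleton_iff, Prod.ext_iff] at h1 h2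
  omega

lemma GZZshared_edge_of_shared_vert {c d v : V2} (hc : Even (c.1 + c.2))
    (hd : Even (d.1 + d.2)) (hne : c ≠ d) (h1 : v ∈ cellVerts c) (h2 : v ∈ cellVerts d) :
    (cellEdges c ∩ cellEdges d).Nonempty := by
  rcases GZZoff_cases hc hd hne (GZZrel_of_shared_vert h1 h2) with
    ⟨ha, hb⟩ | ⟨ha, hb⟩ | ⟨ha, hb⟩ | ⟨ha, hb⟩ | ⟨ha, hb⟩ | ⟨ha, hb⟩
  · obtain rfl : d = (c.1 + 2, c.2) := Prod.ext ha hb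
    exact ⟨s((c.1 + 2, c.2), (c.1 + 2, c.2 + 1)), by simp [cellEdges], by simp [cellEdges]⟩
  · obtain rfl : d = (c.1 - 2, c.2) := Prod.ext ha hb
    exact ⟨s((c.1, c.2), (c.1, c.2 + 1)), by simp [cellEdges], by
      simp only [cellEdges, Set.mem_insert_iff, Set.mem_singleton_iff, Sym2.eq_iff,
        Prod.mk.injEq]
      norm_num <;> omega⟩
  · obtain rfl : d = (c.1 + 1, c.2 + 1) := Prod.ext ha hb
    exact ⟨s((c.1 + 1, c.2 + 1), (c.1 + 2, c.2 + 1)), by simp [cellEdges], by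
      simp only [cellEdges, Set.mem_insert_iff, Set.mem_singleton_iff, Sym2.eq_iff,
        Prod.mk.injEq]
      norm_num <;> omega⟩
  · obtain rfl : d = (c.1 + 1, c.2 - 1) := Prod.ext ha hb
    exact ⟨s((c.1 + 1, c.2), (c.1 + 2, c.2)), by simp [cellEdges], by
      simp only [cellEdges, Set.mem_insert_iff, Set.mem_singleton_iff, Sym2.eq_iff,
        Prod.mk.injEq]
      norm_num <;> omega⟩
  · obtain rfl : d = (c.1 - 1, c.2 + 1) := Prod.ext ha hb
    exact ⟨s((c.1, c.2 + 1), (c.1 + 1, c.2 + 1)), by simp [cellEdges], by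
      simp only [cellEdges, Set.mem_insert_iff, Set.mem_singleton_iff, Sym2.eq_iff,
        Prod.mk.injEq]
      norm_num <;> omega⟩
  · obtain rfl : d = (c.1 - 1, c.2 - 1) := Prod.ext ha hb
    exact ⟨s((c.1, c.2), (c.1 + 1, c.2)), by simp [cellEdges], by
      simp only [cellEdges, Set.mem_insert_iff, Set.mem_singleton_iff, Sym2.eq_iff,
        Prod.mk.injEq]
      norm_num <;> omega⟩

lemma GZZendpoint_mem {c : V2} {e : Sym2 V2} (he : e ∈ cellEdges c) {v : V2} (hv : v ∈ e) :
    v ∈ cellVerts c := by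
  simp only [cellEdges, Set.mem_insert_iff, Set.mem_singleton_iff] at he
  rcases he with rfl | rfl | rfl | rfl | rfl | rfl <;>
    rw [Sym2.mem_iff] at hv <;> rcases hv with rfl | rfl <;> simp [cellVerts]

lemma GZZtwo_edges {c v : V2} (hv : v ∈ cellVerts c) :
    ∃ e1 e2 : Sym2 V2, e1 ∈ cellEdges c ∧ e2 ∈ cellEdges c ∧ e1 ≠ e2 ∧ v ∈ e1 ∧ v ∈ e2 := by
  simp only [cellVerts, Set.mem_insert_iff, Set.mem_singleton_iff] at hv
  rcases hv with rfl | rfl | rfl | rfl | rfl | rfl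
  · exact ⟨s((c.1, c.2), (c.1 + 1, c.2)), s((c.1, c.2), (c.1, c.2 + 1)),
      by simp [cellEdges], by simp [cellEdges],
      by rw [Ne, Sym2.eq_iff]; simp only [Prod.mk.injEq]; omega,
      Sym2.mem_mk_left _ _, Sym2.mem_mk_left _ _⟩
  · exact ⟨s((c.1, c.2), (c.1 + 1, c.2)), s((c.1 + 1, c.2), (c.1 + 2, c.2)),
      by simp [cellEdges], by simp [cellEdges],
      by rw [Ne, Sym2.eq_iff]; simp only [Prod.mk.injEq]; omega,
      Sym2.mem_mk_right _ _, Sym2.mem_mk_left _ _⟩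
  · exact ⟨s((c.1 + 1, c.2), (c.1 + 2, c.2)), s((c.1 + 2, c.2), (c.1 + 2, c.2 + 1)),
      by simp [cellEdges], by simp [cellEdges],
      by rw [Ne, Sym2.eq_iff]; simp only [Prod.mk.injEq]; omega,
      Sym2.mem_mk_right _ _, Sym2.mem_mk_left _ _⟩
  · exact ⟨s((c.1, c.2 + 1), (c.1 + 1, c.2 + 1)), s((c.1, c.2), (c.1, c.2 + 1)),
      by simp [cellEdges], by simp [cellEdges],
      by rw [Ne, Sym2.eq_iff]; simp only [Prod.mk.injEq]; omega,
      Sym2.mem_mk_left _ _, Sym2.mem_mk_right _ _⟩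
  · exact ⟨s((c.1, c.2 + 1), (c.1 + 1, c.2 + 1)), s((c.1 + 1, c.2 + 1), (c.1 + 2, c.2 + 1)),
      by simp [cellEdges], by simp [cellEdges],
      by rw [Ne, Sym2.eq_iff]; simp only [Prod.mk.injEq]; omega,
      Sym2.mem_mk_right _ _, Sym2.mem_mk_left _ _⟩
  · exact ⟨s((c.1 + 1, c.2 + 1), (c.1 + 2, c.2 + 1)), s((c.1 + 2, c.2), (c.1 + 2, c.2 + 1)),
      by simp [cellEdges], by simp [cellEdges],
      by rw [Ne, Sym2.eq_iff]; simp only [Prod.mk.injEq]; omega,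
      Sym2.mem_mk_right _ _, Sym2.mem_mk_right _ _⟩

/-- In a hexagon which is the symmetric difference of two matchings `N`, `O`,
every vertex of the hexagon is covered by a unique `N`-edge, which is a hexagon edge. -/
lemma GZZpm_hex_cover {N O : Set (Sym2 V2)}
    (hN : ∀ e ∈ N, ∀ f ∈ N, e ≠ f → ∀ v : V2, v ∈ e → v ∉ f)
    (hO : ∀ e ∈ O, ∀ f ∈ O, e ≠ f → ∀ v : V2, v ∈ e → v ∉ f)
    {c : V2} (hNO : N ∆ O = cellEdges c) {v : V2} (hv : v ∈ cellVerts c) :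
    ∃ e, e ∈ N ∧ e ∈ cellEdges c ∧ v ∈ e ∧ ∀ f ∈ N, v ∈ f → f = e := by
  obtain ⟨e1, e2, he1E, he2E, hne, hv1, hv2⟩ := GZZtwo_edges hv
  have hm1 : e1 ∈ N ∆ O := by rw [hNO]; exact he1E
  have hm2 : e2 ∈ N ∆ O := by rw [hNO]; exact he2E
  rw [Set.mem_symmDiff] at hm1 hm2
  rcases hm1 with ⟨hN1, -⟩ | ⟨hO1, -⟩
  · exact ⟨e1, hN1, he1E, hv1, fun f hf hvf => by
      by_contra hne'; exact hN f hf e1 hN1 hne' v hvf hv1⟩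
  · rcases hm2 with ⟨hN2, -⟩ | ⟨hO2, -⟩
    · exact ⟨e2, hN2, he2E, hv2, fun f hf hvf => by
        by_contra hne'; exact hN f hf e2 hN2 hne' v hvf hv2⟩
    · exact absurd hv2 (hO e1 hO1 e2 hO2 hne v hv1)

/-- In `Q_{k,l}`, the only common neighbour of the all-zero tuple and the tuple with a `2`
in position `i` is the tuple with a `1` in position `i`. -/
lemma GZZtuple_mid {k l : ℕ} {i : Fin l} {t : (Fin k → Fin 2) × (Fin l → Fin 3)}
    (h1 : (tupleGraph k l).Adj t (fun _ => 0, fun _ => 0))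
    (h2 : (tupleGraph k l).Adj t (fun _ => 0, fun j => if j = i then 2 else 0)) :
    t = (fun _ => 0, fun j => if j = i then 1 else 0) := by
  obtain ⟨t1, t2⟩ := t
  rcases h1 with ⟨j, hd, hj, h2eq⟩ | ⟨j, hd, hj, h1eq⟩
  · exfalso
    simp only at h2eq hd hj
    rcases h2 with ⟨j', hd', hj', he2⟩ | ⟨j', hd', hj', he1⟩
    · have h0 := (congrFun h2eq i).symm.trans (congrFun he2 i)
      simp at h0
    · simp only at hd' hj'
      have ht2 : t2 j' = 0 := congrFun h2eq j'
      rw [ht2] at hd'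
      by_cases hji : j' = i
      · rw [if_pos hji] at hd'
        revert hd'; decide
      · rw [if_neg hji] at hd'
        revert hd'; decide
  · simp only at hd hj h1eq
    have htj : (t2 j : ℕ) = 1 := by
      rcases hd with hd | hd
      · simpa using hd
      · simp at hd
    rcases h2 with ⟨j', hd', hj', he2⟩ | ⟨j', hd', hj', he1⟩
    · exfalso
      simp only at hd'
      have h0 := congrFun h1eq j'
      rw [h0] at hd'
      revert hd'; decide
    · simp only at hd' hj' he1
      have hji : j = i := by
        by_contra hji
        have h0 : t2 i = 0 := hj i (Ne.symm hji)
        by_cases hj'i : j' = i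
        · subst hj'i
          have h3 := hj' j hji
          simp only [hji, if_false] at h3
          rw [h3] at htj
          simp at htj
        · have h3 := hj' i (fun hh => hj'i hh.symm)
          rw [h0] at h3
          simp at h3
      subst hji
      refine Prod.ext h1eq ?_
      funext j0
      by_cases hj0 : j0 = j
      · subst hj0
        simp only [if_pos rfl]
        exact Fin.ext (by simpa using htj)
      · simp only [if_neg hj0]
        exact hj j0 hj0

lemma GZZsymmdiff3 {α : Type*} (M E E' : Set α) (hd : ∀ x, x ∈ E → x ∈ E' → False) :
    (M ∆ E') ∆ ((M ∆ E) ∆ E') = E ∧ M ∆ ((M ∆ E) ∆ E') = E ∪ E' := by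
  constructor <;> ext x <;>
    simp only [Set.mem_symmDiff, Set.mem_union] <;>
    have := hd x <;> tauto

/-- **Claim 2.** With `Q` an induced convex subgraph of the resonance graph of
a benzenoid system isomorphic to `Q_{k,l}` (vertices identified with tuples), `M` the
all-zero vertex, and, for `i ∈ {k+1, …, k+l}`, `Nⁱ` (resp. `Oⁱ`) the vertex with `1`
(resp. `2`) in position `i` and `0` elsewhere, let `hᵢ` and `hᵢ'` be the hexagons with
`M ⊕ Nⁱ = E(hᵢ)` and `Nⁱ ⊕ Oⁱ = E(hᵢ')`. Then `hᵢ` and `hᵢ'` have exactly one common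
edge. -/
theorem hexagon_pair_common_edge (B : Set V2) (hB : IsBenzenoid B)
    (hex : ∃ M, IsPM cellVerts cellEdges B M) (k l : ℕ)
    (S : Set (PM cellVerts cellEdges B))
    (hconv : IsConvex (resGraph cellVerts cellEdges B) S)
    (φ : tupleGraph k l ≃g (resGraph cellVerts cellEdges B).induce S)
    (h h' : Fin l → V2) (hhB : ∀ i, h i ∈ B) (hh'B : ∀ i, h' i ∈ B)
    (hhex : ∀ i : Fin l,
      (φ (fun _ => 0, fun _ => 0)).val.val ∆
        (φ (fun _ => 0, fun j => if j = i then 1 else 0)).val.val = cellEdges (h i))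
    (hhex' : ∀ i : Fin l,
      (φ (fun _ => 0, fun j => if j = i then 1 else 0)).val.val ∆
        (φ (fun _ => 0, fun j => if j = i then 2 else 0)).val.val = cellEdges (h' i)) :
    ∀ i : Fin l, Set.ncard (cellEdges (h i) ∩ cellEdges (h' i)) = 1 := by
  intro i
  classical
  have hevh : Even ((h i).1 + (h i).2) := hB.2.2.1 _ (hhB i)
  have hevh' : Even ((h' i).1 + (h' i).2) := hB.2.2.1 _ (hh'B i)
  have hMN := hhex i
  have hNO := hhex' i
  set Mv := φ (fun _ => 0, fun _ => 0) with hMvdef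
  set Nv := φ (fun _ => 0, fun j => if j = i then 1 else 0) with hNvdef
  set Ov := φ (fun _ => 0, fun j => if j = i then 2 else 0) with hOvdef
  obtain ⟨hMsub, hMmat, hMcov⟩ := Mv.val.prop
  obtain ⟨hNsub, hNmat, hNcov⟩ := Nv.val.prop
  obtain ⟨hOsub, hOmat, hOcov⟩ := Ov.val.prop
  have hEne : s(((h i).1, (h i).2), ((h i).1 + 1, (h i).2)) ∈ cellEdges (h i) := by
    simp [cellEdges]
  have hE'ne : s(((h' i).1, (h' i).2), ((h' i).1 + 1, (h' i).2)) ∈ cellEdges (h' i) := by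
    simp [cellEdges]
  -- the two hexagons are distinct
  have hhne : h i ≠ h' i := by
    intro heq
    have hMO : Mv.val.val = Ov.val.val := by
      have h1 : Mv.val.val ∆ Nv.val.val = Nv.val.val ∆ Ov.val.val := by
        rw [hMN, hNO, heq]
      ext x
      have hx := Set.ext_iff.mp h1 x
      rw [Set.mem_symmDiff, Set.mem_symmDiff] at hx
      tauto
    have hMOv : Mv = Ov := Subtype.ext (Subtype.ext hMO)
    rw [hMvdef, hOvdef] at hMOv
    have h2 := φ.toEquiv.injective hMOv
    have h3 := congrFun (congrArg Prod.snd h2) i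
    simp at h3
  have hsub := GZZshared_subsingleton hevh hevh' hhne
  suffices hne2 : (cellEdges (h i) ∩ cellEdges (h' i)).Nonempty by
    obtain ⟨a, ha⟩ := hne2
    rw [Set.ncard_eq_one]
    exact ⟨a, hsub.eq_singleton_of_mem ha⟩
  by_contra hcon
  have hdis' : ∀ x, x ∈ cellEdges (h i) → x ∈ cellEdges (h' i) → False := by
    intro x h1 h2
    exact hcon ⟨x, h1, h2⟩
  have hvdis : ∀ v, v ∈ cellVerts (h i) → v ∈ cellVerts (h' i) → False := fun v h1 h2 =>
    hcon (GZZshared_edge_of_shared_vert hevh hevh' hhne h1 h2)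
  -- edges of `M` touching the hexagon `h' i` are edges of `N` lying on that hexagon
  have claimA : ∀ e ∈ Mv.val.val, ∀ v : V2, v ∈ e → v ∈ cellVerts (h' i) →
      e ∈ Nv.val.val ∧ e ∈ cellEdges (h' i) := by
    intro e he v hve hv
    have heE : e ∉ cellEdges (h i) := fun hE => hvdis v (GZZendpoint_mem hE hve) hv
    have heN : e ∈ Nv.val.val := by
      by_contra hn
      exact heE (hMN ▸ Set.mem_symmDiff.mpr (Or.inl ⟨he, hn⟩))
    obtain ⟨e0, he0N, he0E', hve0, huniq⟩ := GZZpm_hex_cover hNmat hOmat hNO hv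
    have he0 := huniq e heN hve
    exact ⟨heN, he0 ▸ he0E'⟩
  have claimB : ∀ e ∈ cellEdges (h' i), (e ∈ Mv.val.val ↔ e ∈ Nv.val.val) := by
    intro e heE'
    have heE : e ∉ cellEdges (h i) := fun hE => hdis' e hE heE'
    constructor
    · intro hM
      by_contra hn
      exact heE (hMN ▸ Set.mem_symmDiff.mpr (Or.inl ⟨hM, hn⟩))
    · intro hN0
      by_contra hm
      exact heE (hMN ▸ Set.mem_symmDiff.mpr (Or.inr ⟨hN0, hm⟩))
  have hNO' : Ov.val.val ∆ Nv.val.val = cellEdges (h' i) := by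
    rw [symmDiff_comm]; exact hNO
  -- the modified matching `M' = M ∆ E(h' i)`
  have hM'pm : IsPM cellVerts cellEdges B (Mv.val.val ∆ cellEdges (h' i)) := by
    refine ⟨?_, ?_, ?_⟩
    · intro e he
      rw [Set.mem_symmDiff] at he
      rcases he with ⟨he, -⟩ | ⟨he, -⟩
      · exact hMsub he
      · exact Set.mem_biUnion (hh'B i) he
    · intro e he f hf hnef v hve hvf
      rw [Set.mem_symmDiff] at he hf
      rcases he with ⟨heM, heE'⟩ | ⟨heE', heM⟩ <;> rcases hf with ⟨hfM, hfE'⟩ | ⟨hfE', hfM⟩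
      · exact hMmat e heM f hfM hnef v hve hvf
      · exact heE' (claimA e heM v hve (GZZendpoint_mem hfE' hvf)).2
      · exact hfE' (claimA f hfM v hvf (GZZendpoint_mem heE' hve)).2
      · have heO : e ∈ Ov.val.val := by
          have hx : e ∈ Nv.val.val ∆ Ov.val.val := hNO ▸ heE'
          rw [Set.mem_symmDiff] at hx
          rcases hx with ⟨hn, -⟩ | ⟨ho, -⟩
          · exact absurd ((claimB e heE').mpr hn) heM
          · exact ho
        have hfO : f ∈ Ov.val.val := by
          have hx : f ∈ Nv.val.val ∆ Ov.val.val := hNO ▸ hfE'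
          rw [Set.mem_symmDiff] at hx
          rcases hx with ⟨hn, -⟩ | ⟨ho, -⟩
          · exact absurd ((claimB f hfE').mpr hn) hfM
          · exact ho
        exact hOmat e heO f hfO hnef v hve hvf
    · intro v hv
      by_cases hvh' : v ∈ cellVerts (h' i)
      · obtain ⟨e0, he0O, he0E', hve0, -⟩ := GZZpm_hex_cover hOmat hNmat hNO' hvh'
        have he0nN : e0 ∉ Nv.val.val := by
          have hx : e0 ∈ Nv.val.val ∆ Ov.val.val := hNO ▸ he0E'
          rw [Set.mem_symmDiff] at hx
          rcases hx with ⟨-, hno⟩ | ⟨-, hnn⟩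
          · exact absurd he0O hno
          · exact hnn
        have he0nM : e0 ∉ Mv.val.val := fun hm => he0nN ((claimB e0 he0E').mp hm)
        exact ⟨e0, Set.mem_symmDiff.mpr (Or.inr ⟨he0E', he0nM⟩), hve0⟩
      · obtain ⟨e, heM, hve⟩ := hMcov v hv
        have heE' : e ∉ cellEdges (h' i) := fun hE => hvh' (GZZendpoint_mem hE hve)
        exact ⟨e, Set.mem_symmDiff.mpr (Or.inl ⟨heM, heE'⟩), hve⟩
  set M'p : PM cellVerts cellEdges B := ⟨Mv.val.val ∆ cellEdges (h' i), hM'pm⟩ with hM'def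
  -- symmetric difference computations
  have hM'val : M'p.val = Mv.val.val ∆ cellEdges (h' i) := by rw [hM'def]
  have hMM' : Mv.val.val ∆ M'p.val = cellEdges (h' i) := by
    rw [hM'val]
    exact symmDiff_symmDiff_cancel_left _ _
  have hNeq : Nv.val.val = Mv.val.val ∆ cellEdges (h i) := by
    rw [← hMN, symmDiff_symmDiff_cancel_left]
  have hOeq : Ov.val.val = Nv.val.val ∆ cellEdges (h' i) := by
    rw [← hNO, symmDiff_symmDiff_cancel_left]
  obtain ⟨hsd1, hsd2⟩ := GZZsymmdiff3 Mv.val.val (cellEdges (h i)) (cellEdges (h' i)) hdis'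
  have hM'O : M'p.val ∆ Ov.val.val = cellEdges (h i) := by
    rw [hM'val, hOeq, hNeq]
    exact hsd1
  have hMOd : Mv.val.val ∆ Ov.val.val = cellEdges (h i) ∪ cellEdges (h' i) := by
    rw [hOeq, hNeq]
    exact hsd2
  -- the three matchings are pairwise distinct
  have hMneq : Mv.val ≠ M'p := by
    intro hq
    have h0 : cellEdges (h' i) = (∅ : Set (Sym2 V2)) := by
      rw [← hMM', hq]
      simp
    exact Set.notMem_empty _ (h0 ▸ hE'ne)
  have hM'Oneq : M'p ≠ Ov.val := by
    intro hq
    have h0 : cellEdges (h i) = (∅ : Set (Sym2 V2)) := by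
      rw [← hM'O, hq]
      simp
    exact Set.notMem_empty _ (h0 ▸ hEne)
  have hMOneq : Mv.val ≠ Ov.val := by
    intro hq
    have h0 : cellEdges (h i) ∪ cellEdges (h' i) = (∅ : Set (Sym2 V2)) := by
      rw [← hMOd, hq]
      simp
    exact Set.notMem_empty _ (h0 ▸ (Set.mem_union_left _ hEne))
  -- adjacency
  have a1 : (resGraph cellVerts cellEdges B).Adj Mv.val M'p :=
    ⟨hMneq, h' i, hh'B i, hMM'⟩
  have a2 : (resGraph cellVerts cellEdges B).Adj M'p Ov.val :=
    ⟨hM'Oneq, h i, hhB i, hM'O⟩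
  have hnadj : ¬(resGraph cellVerts cellEdges B).Adj Mv.val Ov.val := by
    rintro ⟨-, c, hcB, hc⟩
    rw [hMOd] at hc
    have hsubE : cellEdges (h i) ⊆ cellEdges c := hc ▸ Set.subset_union_left
    have hsubE' : cellEdges (h' i) ⊆ cellEdges c := hc ▸ Set.subset_union_right
    have hevc : Even (c.1 + c.2) := hB.2.2.1 c hcB
    obtain ⟨e1, e2, he1, he2, hne12, -, -⟩ :=
      GZZtwo_edges (show ((h i).1, (h i).2) ∈ cellVerts (h i) by simp [cellVerts])
    have hch : h i = c := by
      by_contra hchne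
      exact hne12 (GZZshared_subsingleton hevh hevc hchne ⟨he1, hsubE he1⟩ ⟨he2, hsubE he2⟩)
    obtain ⟨f1, f2, hf1, hf2, hnf12, -, -⟩ :=
      GZZtwo_edges (show ((h' i).1, (h' i).2) ∈ cellVerts (h' i) by simp [cellVerts])
    have hch' : h' i = c := by
      by_contra hchne
      exact hnf12
        (GZZshared_subsingleton hevh' hevc hchne ⟨hf1, hsubE' hf1⟩ ⟨hf2, hsubE' hf2⟩)
    exact hhne (hch.trans hch'.symm)
  -- the walk M — M' — O is a shortest path
  set p : (resGraph cellVerts cellEdges B).Walk Mv.val Ov.val :=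
    SimpleGraph.Walk.cons a1 (SimpleGraph.Walk.cons a2 SimpleGraph.Walk.nil) with hpdef
  have hplen : p.length = 2 := rfl
  have hppath : p.IsPath := by
    rw [SimpleGraph.Walk.isPath_def, hpdef]
    simp only [SimpleGraph.Walk.support_cons, SimpleGraph.Walk.support_nil]
    refine List.nodup_cons.mpr ⟨?_, List.nodup_cons.mpr ⟨?_, List.nodup_singleton _⟩⟩
    · intro hmem
      rcases List.mem_cons.mp hmem with hq | hq
      · exact hMneq hq
      · exact hMOneq (List.mem_singleton.mp hq)
    · intro hmem
      exact hM'Oneq (List.mem_singleton.mp hmem)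
  have hdist : (resGraph cellVerts cellEdges B).dist Mv.val Ov.val = 2 := by
    have hle := SimpleGraph.dist_le p
    rw [hplen] at hle
    have h0 : (resGraph cellVerts cellEdges B).dist Mv.val Ov.val ≠ 0 := by
      intro hq
      exact hMOneq ((SimpleGraph.Reachable.dist_eq_zero_iff p.reachable).mp hq)
    have h1 : (resGraph cellVerts cellEdges B).dist Mv.val Ov.val ≠ 1 := by
      intro hq
      exact hnadj (SimpleGraph.dist_eq_one_iff_adj.mp hq)
    omega
  have hM'S : M'p ∈ S := by
    refine hconv Mv.val Ov.val Mv.prop Ov.prop p hppath (by rw [hplen, hdist]) M'p ?_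
    rw [hpdef]
    simp
  -- pull the new matching back through `φ`
  have hadj1 : (tupleGraph k l).Adj (φ.symm ⟨M'p, hM'S⟩) (fun _ => 0, fun _ => 0) := by
    rw [hMvdef] at a1
    exact φ.map_rel_iff.mp (by rw [φ.apply_symm_apply]; exact a1.symm)
  have hadj2 : (tupleGraph k l).Adj (φ.symm ⟨M'p, hM'S⟩)
      (fun _ => 0, fun j => if j = i then 2 else 0) := by
    rw [hOvdef] at a2
    exact φ.map_rel_iff.mp (by rw [φ.apply_symm_apply]; exact a2)
  have hmid := GZZtuple_mid hadj1 hadj2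
  have hM'Nv : (⟨M'p, hM'S⟩ : ↥S) = Nv := by
    rw [hNvdef, ← hmid, φ.apply_symm_apply]
  have hM'N : M'p.val = Nv.val.val := congrArg (fun x => x.val.val) hM'Nv
  have hEE' : Mv.val.val ∆ cellEdges (h' i) = Mv.val.val ∆ cellEdges (h i) := by
    calc Mv.val.val ∆ cellEdges (h' i) = M'p.val := hM'val.symm
    _ = Nv.val.val := hM'N
    _ = Mv.val.val ∆ cellEdges (h i) := hNeq
  have hEq : cellEdges (h' i) = cellEdges (h i) := by
    have h5 := congrArg (fun X => Mv.val.val ∆ X) hEE'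
    simpa [symmDiff_symmDiff_cancel_left] using h5
  exact hdis' _ hEne (by rw [hEq]; exact hEne)


end GZZ
end
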